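/- As x → 1 within S = (0,1) ∪ (1,∞): (x−1)·x·ρ′(x)/ρ(x) → −k, and (x−1)² · h′(x) → k, where h(y) = y·ρ′(y)/ρ(y). In particular, x·ρ′(x)/ρ(x) + k/(x−1) extends continuously over x = 1. -/

import Mathlib

open Polynomial Matrix

/-- The matrix `A_m(z)` with rows `(z + α β⁻¹, α + β)` and `(z(α⁻¹+β⁻¹), z + β α⁻¹)`. -/
noncomputable def aztecA (a b : ℝ) (z : ℂ) : Matrix (Fin 2) (Fin 2) ℂ :=
  !![z + (a : ℂ) * ((b : ℂ))⁻¹, (a : ℂ) + (b : ℂ);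
     z * (((a : ℂ))⁻¹ + ((b : ℂ))⁻¹), z + (b : ℂ) * ((a : ℂ))⁻¹]

/-- `T(z) = A_1(z) A_2(z) ⋯ A_k(z)`. -/
noncomputable def aztecT {k : ℕ} (α β : Fin k → ℝ) (z : ℂ) : Matrix (Fin 2) (Fin 2) ℂ :=
  (List.ofFn fun m => aztecA (α m) (β m) z).prod
open Filter

namespace Stmt19Aux

noncomputable def aztecAP (a b : ℝ) : Matrix (Fin 2) (Fin 2) ℝ[X] :=
  !![X + C (a * b⁻¹), C (a + b); C (a⁻¹ + b⁻¹) * X, X + C (b * a⁻¹)]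

lemma poly_contDiff (n : WithTop ℕ∞) (p : ℝ[X]) : ContDiff ℝ n fun x : ℝ => p.eval x := by
  induction p using Polynomial.induction_on' with
  | add p q hp hq => simpa using hp.add hq
  | monomial m c =>
    simpa [Polynomial.eval_monomial] using (contDiff_const (c := c)).mul (contDiff_id.pow m)

lemma mapA (a b : ℝ) (x : ℝ) :
    (Complex.ofRealHom.comp (evalRingHom x)).mapMatrix (aztecAP a b) = aztecA a b (x : ℂ) := by
  ext i j
  fin_cases i <;> fin_cases j <;>
    simp [aztecAP, aztecA, RingHom.mapMatrix_apply, Matrix.map_apply] <;> push_cast <;> ring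

lemma traceT {k : ℕ} (α β : Fin k → ℝ) (x : ℝ) :
    Matrix.trace (aztecT α β (x : ℂ))
      = ((Polynomial.eval x (Matrix.trace ((List.ofFn fun m => aztecAP (α m) (β m)).prod)) : ℝ) : ℂ) := by
  set φ : ℝ[X] →+* ℂ := Complex.ofRealHom.comp (evalRingHom x) with hφ
  have h1 : φ (Matrix.trace ((List.ofFn fun m => aztecAP (α m) (β m)).prod))
      = Matrix.trace (φ.mapMatrix ((List.ofFn fun m => aztecAP (α m) (β m)).prod)) := by
    simpa using AddMonoidHom.map_trace φ ((List.ofFn fun m => aztecAP (α m) (β m)).prod)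
  have h2 : φ.mapMatrix ((List.ofFn fun m => aztecAP (α m) (β m)).prod)
      = aztecT α β (x : ℂ) := by
    rw [map_list_prod, aztecT, List.map_ofFn]
    refine congrArg List.prod (congrArg List.ofFn (funext fun m => ?_))
    simp only [Function.comp_apply]
    exact mapA (α m) (β m) x
  have h3 : φ (Matrix.trace ((List.ofFn fun m => aztecAP (α m) (β m)).prod))
      = Matrix.trace (aztecT α β (x : ℂ)) := by rw [h1, h2]
  rw [← h3]
  rfl

lemma prod_pos : ∀ L : List (Matrix (Fin 2) (Fin 2) ℝ), L ≠ [] →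
    (∀ M ∈ L, ∀ i j, 0 < M i j) → ∀ i j, 0 < L.prod i j := by
  intro L
  induction L with
  | nil => simp
  | cons M L ih =>
    intro _ h i j
    rcases eq_or_ne L [] with rfl | hL
    · simpa using h M (by simp) i j
    · rw [List.prod_cons, Matrix.mul_apply]
      exact Finset.sum_pos
        (fun l _ => mul_pos (h M (by simp) i l)
          (ih hL (fun N hN => h N (by simp [hN])) l j)) Finset.univ_nonempty

lemma t1_pos {k : ℕ} (hk : 1 ≤ k) (α β : Fin k → ℝ)
    (hα : ∀ m, 0 < α m) (hβ : ∀ m, 0 < β m) :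
    0 < Polynomial.eval 1 (Matrix.trace ((List.ofFn fun m => aztecAP (α m) (β m)).prod)) := by
  set ψ : ℝ[X] →+* ℝ := evalRingHom 1 with hψ
  have h1 : ψ (Matrix.trace ((List.ofFn fun m => aztecAP (α m) (β m)).prod))
      = Matrix.trace (ψ.mapMatrix ((List.ofFn fun m => aztecAP (α m) (β m)).prod)) := by
    simpa using AddMonoidHom.map_trace ψ ((List.ofFn fun m => aztecAP (α m) (β m)).prod)
  have h2 : ψ.mapMatrix ((List.ofFn fun m => aztecAP (α m) (β m)).prod)
      = (List.ofFn fun m => ψ.mapMatrix (aztecAP (α m) (β m))).prod := by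
    rw [map_list_prod, List.map_ofFn]; rfl
  have hpos : ∀ i j, 0 < (List.ofFn fun m => ψ.mapMatrix (aztecAP (α m) (β m))).prod i j := by
    apply prod_pos
    · intro hnil
      have := congrArg List.length hnil
      simp at this
      omega
    · intro M hM i j
      rw [List.mem_ofFn] at hM
      obtain ⟨m, rfl⟩ := hM
      have ha := hα m; have hb := hβ m
      fin_cases i <;> fin_cases j <;>
        simp [aztecAP, RingHom.mapMatrix_apply, Matrix.map_apply, hψ] <;> positivity
  have h4 : ψ (Matrix.trace ((List.ofFn fun m => aztecAP (α m) (β m)).prod)) > 0 := by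
    rw [h1, h2, Matrix.trace_fin_two]
    exact add_pos (hpos 0 0) (hpos 1 1)
  simpa [hψ] using h4

end Stmt19Aux

/-- as `x → 1` within `S = (0,1) ∪ (1,∞)`, `(x−1) x ρ′(x)/ρ(x) → −k` and
`(x−1)² h′(x) → k` where `h(y) = y ρ′(y)/ρ(y)`; in particular
`x ρ′(x)/ρ(x) + k/(x−1)` extends continuously over `x = 1`. -/
theorem stmt19 (k : ℕ) (hk : 1 ≤ k) (α β : Fin k → ℝ)
    (hα : ∀ m, 0 < α m) (hβ : ∀ m, 0 < β m)
    (hprod : ∏ m, α m = ∏ m, β m)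
    (ρ : ℝ → ℝ)
    (hsmooth : ContDiffOn ℝ 2 ρ (Set.Ioo 0 1 ∪ Set.Ioi 1))
    (heig : ∀ x ∈ Set.Ioo (0 : ℝ) 1 ∪ Set.Ioi (1 : ℝ),
        ((x : ℂ) - 1) ^ k * ((ρ x : ℝ) : ℂ) ^ 2
          - Matrix.trace (aztecT α β (x : ℂ)) * ((ρ x : ℝ) : ℂ)
          + ((x : ℂ) - 1) ^ k = 0)
    (habs : ∀ x ∈ Set.Ioo (0 : ℝ) 1 ∪ Set.Ioi (1 : ℝ), 1 < |ρ x|) :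
    Tendsto (fun x : ℝ => (x - 1) * x * deriv ρ x / ρ x)
      (nhdsWithin 1 (Set.Ioo (0 : ℝ) 1 ∪ Set.Ioi 1)) (nhds (-(k : ℝ))) ∧
    Tendsto (fun x : ℝ => (x - 1) ^ 2 * deriv (fun y : ℝ => y * deriv ρ y / ρ y) x)
      (nhdsWithin 1 (Set.Ioo (0 : ℝ) 1 ∪ Set.Ioi 1)) (nhds (k : ℝ)) ∧
    ∃ c : ℝ, Tendsto (fun x : ℝ => x * deriv ρ x / ρ x + (k : ℝ) / (x - 1))
      (nhdsWithin 1 (Set.Ioo (0 : ℝ) 1 ∪ Set.Ioi 1)) (nhds c) := by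
  classical
  set S : Set ℝ := Set.Ioo 0 1 ∪ Set.Ioi 1 with hSdef
  have hSopen : IsOpen S := isOpen_Ioo.union isOpen_Ioi
  have hSne1 : ∀ x ∈ S, x ≠ 1 := by
    rintro x (hx | hx)
    · exact ne_of_lt hx.2
    · exact ne_of_gt hx
  -- the trace polynomial and function
  set t : ℝ → ℝ :=
    fun x => Polynomial.eval x (Matrix.trace ((List.ofFn fun m => Stmt19Aux.aztecAP (α m) (β m)).prod))
    with htdef
  have htc : ContDiff ℝ 2 t := Stmt19Aux.poly_contDiff 2 _
  have ht1 : 0 < t 1 := Stmt19Aux.t1_pos hk α β hα hβ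
  have heigR : ∀ x ∈ S, (x - 1) ^ k * ρ x ^ 2 - t x * ρ x + (x - 1) ^ k = 0 := by
    intro x hx
    have h := heig x hx
    rw [Stmt19Aux.traceT α β x] at h
    have h2 : (((x - 1) ^ k * ρ x ^ 2 - t x * ρ x + (x - 1) ^ k : ℝ) : ℂ) = 0 := by
      push_cast
      push_cast at h
      linear_combination h
    exact_mod_cast h2
  -- discriminant and the large root
  set d : ℝ → ℝ := fun x => t x ^ 2 - 4 * (x - 1) ^ (2 * k) with hddef
  have hdc : ContDiff ℝ 2 d :=
    (htc.pow 2).sub (contDiff_const.mul ((contDiff_id.sub contDiff_const).pow (2 * k)))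
  set w : ℝ → ℝ := fun x => (t x + Real.sqrt (d x)) / 2 with hwdef
  have hd1 : 0 < d 1 := by
    have : ((1 : ℝ) - 1) ^ (2 * k) = 0 := by
      rw [sub_self]; exact zero_pow (by omega)
    simp only [hddef, this]
    nlinarith [ht1]
  set U : Set ℝ := {x | 0 < d x} ∩ {x | 0 < t x} with hUdef
  have hUopen : IsOpen U :=
    (isOpen_lt continuous_const hdc.continuous).inter (isOpen_lt continuous_const htc.continuous)
  have h1U : (1 : ℝ) ∈ U := ⟨hd1, ht1⟩
  have hwc : ContDiffOn ℝ 2 w U := by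
    intro x hx
    have hs : ContDiffAt ℝ 2 (fun y => Real.sqrt (d y)) x :=
      (Real.contDiffAt_sqrt (ne_of_gt hx.1)).comp x hdc.contDiffAt
    exact ((htc.contDiffAt.add hs).div_const 2).contDiffWithinAt
  have hwpos : ∀ x ∈ U, 0 < w x := by
    intro x hx
    have h1 : 0 < t x := hx.2
    have h2 : 0 ≤ Real.sqrt (d x) := Real.sqrt_nonneg _
    simp only [hwdef]
    positivity
  have hw1 : w 1 = t 1 := by
    have h0 : ((1 : ℝ) - 1) ^ (2 * k) = 0 := by
      rw [sub_self]; exact zero_pow (by omega)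
    simp only [hwdef, hddef, h0]
    rw [show t 1 ^ 2 - 4 * 0 = t 1 ^ 2 by ring, Real.sqrt_sq ht1.le]
    ring
  -- regularity of derivatives of w
  have hdw : ContDiffOn ℝ 1 (deriv w) U := hwc.deriv_of_isOpen hUopen (by norm_num)
  have hdwc1 : ContinuousAt (deriv w) 1 :=
    (hdw.continuousOn.continuousAt (hUopen.mem_nhds h1U))
  have hwc1 : ContinuousAt w 1 :=
    (hwc.continuousOn.continuousAt (hUopen.mem_nhds h1U))
  set G : ℝ → ℝ := fun x => x * deriv w x / w x with hGdef
  have hGc : ContDiffOn ℝ 1 G U :=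
    (contDiff_id.contDiffOn.mul hdw).div (hwc.of_le one_le_two)
      (fun x hx => (hwpos x hx).ne')
  have hdGcont : ContinuousOn (deriv G) U :=
    hGc.continuousOn_deriv_of_isOpen hUopen (le_refl 1)
  have hdGc1 : ContinuousAt (deriv G) 1 := hdGcont.continuousAt (hUopen.mem_nhds h1U)
  have hGdiff : ∀ x ∈ U, DifferentiableAt ℝ G x := fun x hx =>
    ((hGc.differentiableOn one_ne_zero).differentiableAt (hUopen.mem_nhds hx))
  -- key identity : w = (x-1)^k ρ on S ∩ U
  have key : ∀ x ∈ S ∩ U, w x = (x - 1) ^ k * ρ x := by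
    rintro x ⟨hxS, hxU⟩
    have hx1 : x - 1 ≠ 0 := sub_ne_zero.mpr (hSne1 x hxS)
    have h2k : (x - 1) ^ (2 * k) = ((x - 1) ^ k) ^ 2 := by
      rw [two_mul, pow_add, sq]
    have hq : 0 < (x - 1) ^ (2 * k) := by
      rw [h2k]
      exact pow_two_pos_of_ne_zero (pow_ne_zero _ hx1)
    have hequ : ((x - 1) ^ k * ρ x) ^ 2 - t x * ((x - 1) ^ k * ρ x) + (x - 1) ^ (2 * k) = 0 := by
      linear_combination (x - 1) ^ k * heigR x hxS + h2k
    set u : ℝ := (x - 1) ^ k * ρ x with hudef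
    have htx : 0 < t x := hxU.2
    have hupos : 0 < u := by
      rcases lt_or_ge 0 u with h | h
      · exact h
      · nlinarith [hequ, hq, mul_nonneg htx.le (neg_nonneg.mpr h)]
    have husq : (x - 1) ^ (2 * k) < u ^ 2 := by
      have habs' := habs x hxS
      have hb : |(x - 1) ^ k| < |u| := by
        calc |(x - 1) ^ k| = |(x - 1) ^ k| * 1 := (mul_one _).symm
          _ < |(x - 1) ^ k| * |ρ x| :=
              mul_lt_mul_of_pos_left habs' (abs_pos.mpr (pow_ne_zero _ hx1))
          _ = |u| := (abs_mul _ _).symm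
      have := mul_self_lt_mul_self (abs_nonneg _) hb
      rw [← abs_mul, ← abs_mul, abs_mul_self, abs_mul_self] at this
      nlinarith [this, h2k]
    have h2ut : t x ≤ 2 * u := by
      by_contra hlt
      push_neg at hlt
      have hq' : (x - 1) ^ (2 * k) = u * (t x - u) := by linear_combination hequ
      nlinarith [hupos, husq, hq']
    have hdx : d x = (2 * u - t x) ^ 2 := by
      simp only [hddef]
      linear_combination -4 * hequ
    have hsq : Real.sqrt (d x) = 2 * u - t x := by
      rw [hdx, Real.sqrt_sq (by linarith)]
    show w x = u
    simp only [hwdef, hsq]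
    ring
  have hρdiff : ∀ x ∈ S, DifferentiableAt ℝ ρ x := fun x hx =>
    ((hsmooth.differentiableOn two_ne_zero).differentiableAt (hSopen.mem_nhds hx))
  have keyd : ∀ x ∈ S ∩ U,
      deriv w x = k * (x - 1) ^ (k - 1) * ρ x + (x - 1) ^ k * deriv ρ x := by
    intro x hx
    have hmem : S ∩ U ∈ nhds x := (hSopen.inter hUopen).mem_nhds hx
    have hEq : w =ᶠ[nhds x] fun y => (y - 1) ^ k * ρ y :=
      Filter.eventuallyEq_of_mem hmem (fun y hy => key y hy)
    rw [hEq.deriv_eq]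
    have h1 : HasDerivAt (fun y : ℝ => (y - 1) ^ k) ((k : ℝ) * (x - 1) ^ (k - 1)) x := by
      have := (hasDerivAt_pow k (x - 1)).comp x ((hasDerivAt_id x).sub_const 1)
      simpa [Function.comp_def] using this
    have h2 : HasDerivAt ρ (deriv ρ x) x := (hρdiff x hx.1).hasDerivAt
    exact (h1.mul h2).deriv
  -- the ratio identity
  have hratio : ∀ x ∈ S ∩ U, deriv ρ x / ρ x = deriv w x / w x - k / (x - 1) := by
    intro x hx
    have hx1 : x - 1 ≠ 0 := sub_ne_zero.mpr (hSne1 x hx.1)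
    have hρ0 : ρ x ≠ 0 := by
      have := habs x hx.1
      intro h
      rw [h, abs_zero] at this
      linarith
    have hw0 : w x ≠ 0 := (hwpos x hx.2).ne'
    have e1 := key x hx
    have e2 := keyd x hx
    have hpk : (x - 1) ^ (k - 1) * (x - 1) = (x - 1) ^ k := by
      rw [← pow_succ]
      congr 1
      omega
    rw [div_sub_div _ _ hw0 hx1, div_eq_div_iff hρ0 (mul_ne_zero hw0 hx1)]
    rw [e1, e2]
    linear_combination (-(k : ℝ) * ρ x ^ 2) * hpk
  -- eventual membership of the good set
  have hev : S ∩ U ∈ nhdsWithin 1 S :=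
    Filter.inter_mem self_mem_nhdsWithin (mem_nhdsWithin_of_mem_nhds (hUopen.mem_nhds h1U))
  have hw10 : w 1 ≠ 0 := by rw [hw1]; exact ht1.ne'
  refine ⟨?_, ?_, ⟨1 * deriv w 1 / w 1 - k, ?_⟩⟩
  · -- first limit
    have hcont : ContinuousAt (fun x : ℝ => (x - 1) * (x * deriv w x / w x) - k * x) 1 :=
      ((continuousAt_id.sub continuousAt_const).mul
        ((continuousAt_id.mul hdwc1).div hwc1 hw10)).sub
        (continuousAt_const.mul continuousAt_id)
    have hval : ((1 : ℝ) - 1) * (1 * deriv w 1 / w 1) - (k : ℝ) * 1 = -(k : ℝ) := by norm_num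
    have hlim : Tendsto (fun x : ℝ => (x - 1) * (x * deriv w x / w x) - k * x)
        (nhdsWithin 1 S) (nhds (-(k : ℝ))) := by
      have := hcont.tendsto.mono_left (nhdsWithin_le_nhds (s := S))
      rw [hval] at this
      exact this
    refine Tendsto.congr' ?_ hlim
    filter_upwards [hev] with x hx
    have hx1 : x - 1 ≠ 0 := sub_ne_zero.mpr (hSne1 x hx.1)
    have hw0 : w x ≠ 0 := (hwpos x hx.2).ne'
    have hρ0 : ρ x ≠ 0 := by
      have := habs x hx.1
      intro h
      rw [h, abs_zero] at this
      linarith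
    have hr' : deriv ρ x = (deriv w x / w x - k / (x - 1)) * ρ x := by
      rw [← hratio x hx]; field_simp
    rw [hr']
    field_simp
  · -- second limit
    have hderiv : ∀ x ∈ S ∩ U,
        deriv (fun y : ℝ => y * deriv ρ y / ρ y) x = deriv G x + k / (x - 1) ^ 2 := by
      intro x hx
      have hx1 : x - 1 ≠ 0 := sub_ne_zero.mpr (hSne1 x hx.1)
      have hmem : S ∩ U ∈ nhds x := (hSopen.inter hUopen).mem_nhds hx
      have hEq : (fun y : ℝ => y * deriv ρ y / ρ y) =ᶠ[nhds x]
          (fun y => G y - k - k / (y - 1)) := by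
        filter_upwards [hmem] with y hy
        have hy1 : y - 1 ≠ 0 := sub_ne_zero.mpr (hSne1 y hy.1)
        have hw0 : w y ≠ 0 := (hwpos y hy.2).ne'
        have hρ0 : ρ y ≠ 0 := by
          have := habs y hy.1
          intro h
          rw [h, abs_zero] at this
          linarith
        have hr' : deriv ρ y = (deriv w y / w y - k / (y - 1)) * ρ y := by
          rw [← hratio y hy]; field_simp
        rw [hr']
        simp only [hGdef]
        field_simp
        ring
      rw [hEq.deriv_eq]
      have h2 : HasDerivAt (fun y : ℝ => (k : ℝ) / (y - 1)) (-(k / (x - 1) ^ 2)) x := by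
        have h4 := (hasDerivAt_inv hx1).comp x ((hasDerivAt_id x).sub_const 1)
        have h5 := h4.const_mul (k : ℝ)
        simpa [Function.comp, div_eq_mul_inv, mul_comm] using h5
      have h6 : HasDerivAt (fun y : ℝ => G y - k - k / (y - 1))
          (deriv G x + k / (x - 1) ^ 2) x := by
        have h7 := (((hGdiff x hx.2).hasDerivAt.sub_const (k : ℝ)).sub h2)
        simp only [sub_neg_eq_add] at h7; exact h7
      exact h6.deriv
    have hcont : ContinuousAt (fun x : ℝ => (x - 1) ^ 2 * deriv G x + k) 1 :=
      (((continuousAt_id.sub continuousAt_const).pow 2).mul hdGc1).add continuousAt_const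
    have hval : ((1 : ℝ) - 1) ^ 2 * deriv G 1 + (k : ℝ) = (k : ℝ) := by norm_num
    have hlim : Tendsto (fun x : ℝ => (x - 1) ^ 2 * deriv G x + k)
        (nhdsWithin 1 S) (nhds (k : ℝ)) := by
      have := hcont.tendsto.mono_left (nhdsWithin_le_nhds (s := S))
      rw [hval] at this
      exact this
    refine Tendsto.congr' ?_ hlim
    filter_upwards [hev] with x hx
    have hx1 : x - 1 ≠ 0 := sub_ne_zero.mpr (hSne1 x hx.1)
    rw [hderiv x hx]
    field_simp
  · -- third limit
    have hcont : ContinuousAt (fun x : ℝ => x * deriv w x / w x - k) 1 :=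
      ((continuousAt_id.mul hdwc1).div hwc1 hw10).sub continuousAt_const
    have hlim : Tendsto (fun x : ℝ => x * deriv w x / w x - k)
        (nhdsWithin 1 S) (nhds (1 * deriv w 1 / w 1 - k)) :=
      hcont.tendsto.mono_left (nhdsWithin_le_nhds (s := S))
    refine Tendsto.congr' ?_ hlim
    filter_upwards [hev] with x hx
    have hx1 : x - 1 ≠ 0 := sub_ne_zero.mpr (hSne1 x hx.1)
    have hw0 : w x ≠ 0 := (hwpos x hx.2).ne'
    have hρ0 : ρ x ≠ 0 := by
      have := habs x hx.1
      intro h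
      rw [h, abs_zero] at this
      linarith
    have hr' : deriv ρ x = (deriv w x / w x - k / (x - 1)) * ρ x := by
      rw [← hratio x hx]; field_simp
    rw [hr']
    field_simp
    ring
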